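/- Let $A, B$ be nonpositive operators (in the sense of Komatsu) on a Banach space $X$ with $D(A) \subseteq D(B)$ and $A - B \in \mathcal{I}$ for a symmetrically normed operator ideal $\mathcal{I}$. Let $\varphi(z)=\int_{(0,\infty)} \frac{z}{t-z} d\mu(t)$ be a negative complete Bernstein function with $\varphi'(-0) := \int_{(0,\infty)} d\mu(t)/t < \infty$. Then $\varphi(A)-\varphi(B) \in \mathcal{I}$ and $\|\varphi(A)-\varphi(B)\|_{\mathcal{I}} \le M_A M_B \varphi'(-0)\|A-B\|_{\mathcal{I}}$. -/

import Mathlib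

open MeasureTheory Set Filter Topology

variable {X : Type*} [NormedAddCommGroup X] [NormedSpace ℂ X] [CompleteSpace X]

/-- `R` is the resolvent of the (possibly unbounded) operator `A` at the real point `t`,
i.e. `R` is an everywhere defined two-sided bounded inverse of `t•I - A`. -/
structure IsResolvent (A : X →ₗ.[ℂ] X) (t : ℝ) (R : X →L[ℂ] X) : Prop where
  mem : ∀ x : X, R x ∈ A.domain
  right_inv : ∀ x : X, (t : ℂ) • (R x) - A ⟨R x, mem x⟩ = x
  left_inv : ∀ x : A.domain, R ((t : ℂ) • (x : X) - A x) = x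

/-- The sum of an unbounded operator and a bounded operator, defined on the domain of the
unbounded one. -/
noncomputable def pAdd (A : X →ₗ.[ℂ] X) (V : X →L[ℂ] X) : X →ₗ.[ℂ] X where
  domain := A.domain
  toFun := A.toFun + (V : X →ₗ[ℂ] X).comp A.domain.subtype

/-- A symmetrically normed operator ideal in `L(X)`: a two-sided ideal with a complete norm
`inorm` dominating the operator norm and satisfying `‖A S B‖_I ≤ ‖A‖ ‖S‖_I ‖B‖`.
Completeness is encoded through closure under Bochner integration with a dominating
`I`-norm bound. -/
structure OperatorIdeal (X : Type*) [NormedAddCommGroup X] [NormedSpace ℂ X] where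
  Mem : (X →L[ℂ] X) → Prop
  inorm : (X →L[ℂ] X) → ℝ
  zero_mem : Mem 0
  add_mem : ∀ {S T}, Mem S → Mem T → Mem (S + T)
  smul_mem : ∀ (c : ℂ) {S}, Mem S → Mem (c • S)
  comp_mem : ∀ (A : X →L[ℂ] X) {S} (B : X →L[ℂ] X), Mem S → Mem (A.comp (S.comp B))
  inorm_nonneg : ∀ S, 0 ≤ inorm S
  inorm_add_le : ∀ S T, inorm (S + T) ≤ inorm S + inorm T
  inorm_smul : ∀ (c : ℂ) (S), inorm (c • S) = ‖c‖ * inorm S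
  inorm_comp_le : ∀ (A S B : X →L[ℂ] X), Mem S →
    inorm (A.comp (S.comp B)) ≤ ‖A‖ * inorm S * ‖B‖
  opNorm_le_inorm : ∀ S, Mem S → ‖S‖ ≤ inorm S
  integral_mem : ∀ (μ : MeasureTheory.Measure ℝ) (f : ℝ → (X →L[ℂ] X)) (g : ℝ → ℝ),
    MeasureTheory.Integrable g μ → (∀ᵐ t ∂μ, Mem (f t) ∧ inorm (f t) ≤ g t) →
    MeasureTheory.Integrable f μ →
    Mem (∫ t, f t ∂μ) ∧ inorm (∫ t, f t ∂μ) ≤ ∫ t, g t ∂μ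

/-- The resolvent identity. -/
theorem resolvent_id' (A : X →ₗ.[ℂ] X) (R : ℝ → X →L[ℂ] X)
    (hR : ∀ t > (0:ℝ), IsResolvent A t (R t)) {t s : ℝ} (ht : 0 < t) (hs : 0 < s) :
    R t - R s = ((s : ℂ) - t) • (R t).comp (R s) := by
  ext x
  have hys : R s x ∈ A.domain := (hR s hs).mem x
  set y : A.domain := ⟨R s x, hys⟩ with hy
  have h1 : (s:ℂ) • ((y:X)) - A y = x := (hR s hs).right_inv x
  have h2 : R t ((t:ℂ) • (y:X) - A y) = (y:X) := (hR t ht).left_inv y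
  have h3 : (t:ℂ) • (y:X) - A y = ((t:ℂ) - s) • (y:X) + x := by
    rw [← h1, sub_smul]; abel
  rw [h3, map_add, ContinuousLinearMap.map_smul] at h2
  have hyx : (y : X) = R s x := rfl
  simp only [ContinuousLinearMap.sub_apply, ContinuousLinearMap.smul_apply,
    ContinuousLinearMap.comp_apply]
  rw [← hyx]
  have h4 : R t x = (y:X) - ((t:ℂ) - s) • R t (y:X) := eq_sub_of_add_eq' h2
  rw [hyx] at h4
  rw [h4]
  module

/-- Resolvents with the Komatsu bound are continuous on `(0, ∞)`. -/
theorem resolvent_contOn' (A : X →ₗ.[ℂ] X) (R : ℝ → X →L[ℂ] X) (M : ℝ)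
    (hR : ∀ t > (0:ℝ), IsResolvent A t (R t))
    (hM : ∀ t > (0:ℝ), t * ‖R t‖ ≤ M) :
    ContinuousOn R (Ioi (0:ℝ)) := by
  intro s hs
  rw [mem_Ioi] at hs
  have hM0 : 0 ≤ M := le_trans (mul_nonneg hs.le (norm_nonneg _)) (hM s hs)
  have hRnorm : ∀ t > (0:ℝ), ‖R t‖ ≤ M / t := fun t ht => by
    rw [le_div_iff₀ ht]; simpa [mul_comm] using hM t ht
  rw [ContinuousWithinAt, ← tendsto_sub_nhds_zero_iff]
  apply squeeze_zero_norm' (a := fun t => |s - t| * ((M/t) * (M/s)))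
  · filter_upwards [self_mem_nhdsWithin] with t (ht : t ∈ Ioi (0:ℝ))
    rw [mem_Ioi] at ht
    rw [resolvent_id' A R hR ht hs, norm_smul ((s:ℂ) - t) ((R t).comp (R s))]
    have h1 : ‖((s:ℂ) - t)‖ = |s - t| := by
      rw [show ((s:ℂ) - t) = ((s - t : ℝ) : ℂ) by push_cast; ring, Complex.norm_real,
        Real.norm_eq_abs]
    rw [h1]
    refine mul_le_mul_of_nonneg_left ?_ (abs_nonneg _)
    calc ‖(R t).comp (R s)‖ ≤ ‖R t‖ * ‖R s‖ := ContinuousLinearMap.opNorm_comp_le _ _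
      _ ≤ (M/t) * (M/s) :=
          mul_le_mul (hRnorm t ht) (hRnorm s hs) (norm_nonneg _) (div_nonneg hM0 ht.le)
  · have h0 : Tendsto (fun t : ℝ => |s - t| * ((M/t) * (M/s))) (𝓝 s)
        (𝓝 (|s - s| * ((M/s) * (M/s)))) := by
      apply Tendsto.mul
      · exact (continuous_const.sub continuous_id).abs.tendsto s
      · exact ((tendsto_const_nhds.div tendsto_id hs.ne').mul tendsto_const_nhds)
    simpa using h0.mono_left nhdsWithin_le_nhds

/-- Lemma 2(ii): for nonpositive operators `A, B` with `D(A) ⊆ D(B)` whose difference extends to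
an operator `W` of a symmetrically normed ideal `I`, if `φ'(-0) = ∫ dμ(t)/t < ∞` then
`φ(A) - φ(B) = ∫ t R(t,A)(A-B)R(t,B) dμ(t)` belongs to `I` and
`‖φ(A)-φ(B)‖_I ≤ M_A M_B φ'(-0) ‖A-B‖_I`. -/
theorem Bernstein_difference_nonpositive
    (I : OperatorIdeal X)
    (A B : X →ₗ.[ℂ] X)
    (hAclosed : IsClosed (A.graph : Set (X × X)))
    (hBclosed : IsClosed (B.graph : Set (X × X)))
    (hAdense : Dense (A.domain : Set X)) (hBdense : Dense (B.domain : Set X))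
    (RA RB : ℝ → (X →L[ℂ] X))
    (hRA : ∀ t > (0 : ℝ), IsResolvent A t (RA t))
    (hRB : ∀ t > (0 : ℝ), IsResolvent B t (RB t))
    (MA MB : ℝ)
    (hMA : IsLUB ((fun t => t * ‖RA t‖) '' Ioi (0 : ℝ)) MA)
    (hMB : IsLUB ((fun t => t * ‖RB t‖) '' Ioi (0 : ℝ)) MB)
    (hdom : A.domain ≤ B.domain)
    (W : X →L[ℂ] X) (hW : I.Mem W)
    (hWext : ∀ x : A.domain, W (x : X) = A x - B ⟨(x : X), hdom x.2⟩)
    (μ : Measure ℝ) (hsupp : μ (Iic (0 : ℝ)) = 0)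
    (hμ : Integrable (fun t => (1 + t)⁻¹) μ)
    (hμ' : Integrable (fun t => t⁻¹) μ) :
    I.Mem (∫ t, (t : ℂ) • ((RA t).comp (W.comp (RB t))) ∂μ) ∧
      I.inorm (∫ t, (t : ℂ) • ((RA t).comp (W.comp (RB t))) ∂μ) ≤
        MA * MB * (∫ t, t⁻¹ ∂μ) * I.inorm W := by
  have hMAub : ∀ t > (0:ℝ), t * ‖RA t‖ ≤ MA := fun t ht => hMA.1 ⟨t, mem_Ioi.mpr ht, rfl⟩
  have hMBub : ∀ t > (0:ℝ), t * ‖RB t‖ ≤ MB := fun t ht => hMB.1 ⟨t, mem_Ioi.mpr ht, rfl⟩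
  have hMA0 : 0 ≤ MA := le_trans (mul_nonneg zero_le_one (norm_nonneg _)) (hMAub 1 one_pos)
  have hMB0 : 0 ≤ MB := le_trans (mul_nonneg zero_le_one (norm_nonneg _)) (hMBub 1 one_pos)
  set f : ℝ → X →L[ℂ] X := fun t => (t : ℂ) • ((RA t).comp (W.comp (RB t))) with hf
  have hae : ∀ᵐ t ∂μ, 0 < t := by
    rw [MeasureTheory.ae_iff]
    have h : {t : ℝ | ¬ (0 < t)} = Iic 0 := by ext u; simp [not_lt]
    rw [h]; exact hsupp
  have hcontA : ContinuousOn RA (Ioi (0:ℝ)) := resolvent_contOn' A RA MA hRA hMAub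
  have hcontB : ContinuousOn RB (Ioi (0:ℝ)) := resolvent_contOn' B RB MB hRB hMBub
  have hfcont : ContinuousOn f (Ioi (0:ℝ)) := by
    apply ContinuousOn.smul (Complex.continuous_ofReal.continuousOn)
    have h1 : ContinuousOn (fun t => W.comp (RB t)) (Ioi (0:ℝ)) :=
      ((ContinuousLinearMap.compL ℂ X X X W).continuous).comp_continuousOn hcontB
    exact isBoundedBilinearMap_comp.continuous.comp_continuousOn (hcontA.prodMk h1)
  have hmeas : AEStronglyMeasurable f μ := by
    haveI := secondCountableTopologyEither_of_left ℝ (X →L[ℂ] X)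
    have h1 : AEStronglyMeasurable f (μ.restrict (Ioi (0:ℝ))) :=
      hfcont.aestronglyMeasurable measurableSet_Ioi
    rwa [Measure.restrict_eq_self_of_ae_mem (hae.mono fun t ht => mem_Ioi.mpr ht)] at h1
  have hbound : ∀ t > (0:ℝ), ∀ c : ℝ, 0 ≤ c →
      t * (‖RA t‖ * c * ‖RB t‖) ≤ MA * MB * c * t⁻¹ := by
    intro t ht c hc0
    have key : (t * ‖RA t‖) * (t * ‖RB t‖) ≤ MA * MB :=
      mul_le_mul (hMAub t ht) (hMBub t ht) (mul_nonneg ht.le (norm_nonneg _)) hMA0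
    rw [show MA * MB * c * t⁻¹ = (MA * MB * c) / t by ring, le_div_iff₀ ht]
    calc t * (‖RA t‖ * c * ‖RB t‖) * t = ((t * ‖RA t‖) * (t * ‖RB t‖)) * c := by ring
      _ ≤ MA * MB * c := mul_le_mul_of_nonneg_right key hc0
  have hInt : Integrable f μ := by
    refine Integrable.mono' (hμ'.const_mul (MA * MB * ‖W‖)) hmeas ?_
    filter_upwards [hae] with t ht
    have h2 : ‖f t‖ = t * ‖(RA t).comp (W.comp (RB t))‖ := by
      rw [hf]; simp [norm_smul, Complex.norm_real, abs_of_pos ht]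
    rw [h2]
    calc t * ‖(RA t).comp (W.comp (RB t))‖
        ≤ t * (‖RA t‖ * ‖W‖ * ‖RB t‖) := by
          gcongr
          calc ‖(RA t).comp (W.comp (RB t))‖ ≤ ‖RA t‖ * ‖W.comp (RB t)‖ :=
                ContinuousLinearMap.opNorm_comp_le _ _
            _ ≤ ‖RA t‖ * (‖W‖ * ‖RB t‖) := by
                gcongr; exact ContinuousLinearMap.opNorm_comp_le _ _
            _ = ‖RA t‖ * ‖W‖ * ‖RB t‖ := by ring
      _ ≤ MA * MB * ‖W‖ * t⁻¹ := hbound t ht ‖W‖ (norm_nonneg _)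
  have hcond : ∀ᵐ t ∂μ, I.Mem (f t) ∧ I.inorm (f t) ≤ MA * MB * I.inorm W * t⁻¹ := by
    filter_upwards [hae] with t ht
    refine ⟨I.smul_mem _ (I.comp_mem (RA t) (RB t) hW), ?_⟩
    have h1 : I.inorm (f t) = t * I.inorm ((RA t).comp (W.comp (RB t))) := by
      rw [show f t = (t : ℂ) • ((RA t).comp (W.comp (RB t))) from rfl, I.inorm_smul,
        Complex.norm_real, Real.norm_eq_abs, abs_of_pos ht]
    rw [h1]
    calc t * I.inorm ((RA t).comp (W.comp (RB t)))
        ≤ t * (‖RA t‖ * I.inorm W * ‖RB t‖) :=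
          mul_le_mul_of_nonneg_left (I.inorm_comp_le _ _ _ hW) ht.le
      _ ≤ MA * MB * I.inorm W * t⁻¹ := hbound t ht _ (I.inorm_nonneg W)
  obtain ⟨hmem, hle⟩ := I.integral_mem μ f (fun t => MA * MB * I.inorm W * t⁻¹)
    (hμ'.const_mul _) hcond hInt
  refine ⟨hmem, hle.trans ?_⟩
  rw [MeasureTheory.integral_const_mul]
  apply le_of_eq; ring
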